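/- Let H be a real inner product space and let j, σ ∈ H with curl : H → K linear into another inner product space K. If (curl j − curl σ, C) = −(r, div C) for all C in a subspace V ⊂ K with curl j − curl σ ∈ V, and div : V → L is surjective onto a space L containing r, then taking C = curl j − curl σ with div C = 0 (assuming curl(range) is divergence-free) yields curl j = curl σ, and consequently (r, div C) = 0 for all C ∈ V, which forces r = 0 by surjectivity of div. -/
import Mathlib

open scoped RealInnerProductSpace

/-- Abstract vanishing of the Lagrange multiplier in the B–j scheme. -/
theorem stmt_18
    (H K L : Type*) [NormedAddCommGroup H] [InnerProductSpace ℝ H]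
    [NormedAddCommGroup K] [InnerProductSpace ℝ K]
    [NormedAddCommGroup L] [InnerProductSpace ℝ L]
    (curl : H →ₗ[ℝ] K) (div : K →ₗ[ℝ] L) (V : Submodule ℝ K)
    (j σ : H) (r : L)
    (h_eq : ∀ C ∈ V, ⟪curl j - curl σ, C⟫ = -⟪r, div C⟫)
    (h_mem : curl j - curl σ ∈ V)
    (h_divfree : ∀ x : H, div (curl x) = 0)
    (h_surj : ∀ l : L, ∃ C ∈ V, div C = l) :
    curl j = curl σ ∧ r = 0 := by
  have hdiv0 : div (curl j - curl σ) = 0 := by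
    simp [map_sub, h_divfree]
  have hcurl : curl j = curl σ := by
    have h := h_eq _ h_mem
    rw [hdiv0] at h
    simp only [inner_zero_right, neg_zero] at h
    exact sub_eq_zero.mp (inner_self_eq_zero.mp h)
  refine ⟨hcurl, ?_⟩
  obtain ⟨C, hC, hdC⟩ := h_surj r
  have h := h_eq C hC
  rw [hdC, sub_eq_zero.mpr hcurl, inner_zero_left] at h
  exact inner_self_eq_zero.mp (neg_eq_zero.mp h.symm)
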